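/- For every m ≥ 4, the code RC_m is the disjoint union of three groups: the codewords beginning with 0011 from the left, the codewords beginning with 011 from the left, and the codewords beginning with 1 from the left; every codeword belongs to exactly one of these groups. -/
import Mathlib


/-- The RR constraint: no index `i` with `i + 2 ≤ m - 1` such that `c i = 0` and `c (i+2) = 0`
(bit `false` plays the role of `0`, bit `true` the role of `1`). -/
def RRok (m : ℕ) (c : Fin m → Bool) : Prop :=
  ∀ i j : Fin m, (j : ℕ) = (i : ℕ) + 2 → ¬(c i = false ∧ c j = false)

instance (m : ℕ) : DecidablePred (RRok m) := fun c => by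
  unfold RRok; infer_instance

/-- The LOCO code `RC_m`: all binary words of length `m` satisfying the RR constraint. -/
def RC (m : ℕ) : Finset (Fin m → Bool) := Finset.univ.filter (RRok m)

/-- `N m = |RC_m|`. -/
def N (m : ℕ) : ℕ := (RC m).card


/-- For `m ≥ 4`, `RC_m` is the disjoint union of three groups: codewords beginning (from the
left) with `0011`, codewords beginning with `011`, and codewords beginning with `1`; every
codeword belongs to exactly one group. -/
theorem stmt4 (m : ℕ) (hm : 4 ≤ m) :
    ∀ c ∈ RC m,
      let P1 := c ⟨m - 1, by omega⟩ = false ∧ c ⟨m - 2, by omega⟩ = false ∧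
                c ⟨m - 3, by omega⟩ = true ∧ c ⟨m - 4, by omega⟩ = true
      let P2 := c ⟨m - 1, by omega⟩ = false ∧ c ⟨m - 2, by omega⟩ = true ∧
                c ⟨m - 3, by omega⟩ = true
      let P3 := c ⟨m - 1, by omega⟩ = true
      (P1 ∧ ¬P2 ∧ ¬P3) ∨ (¬P1 ∧ P2 ∧ ¬P3) ∨ (¬P1 ∧ ¬P2 ∧ P3) := by
  intro c hc P1 P2 P3
  have hok : RRok m c := (Finset.mem_filter.mp hc).2
  have h31 : ¬(c ⟨m - 3, by omega⟩ = false ∧ c ⟨m - 1, by omega⟩ = false) :=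
    hok ⟨m - 3, by omega⟩ ⟨m - 1, by omega⟩ (by simp; omega)
  have h42 : ¬(c ⟨m - 4, by omega⟩ = false ∧ c ⟨m - 2, by omega⟩ = false) :=
    hok ⟨m - 4, by omega⟩ ⟨m - 2, by omega⟩ (by simp; omega)
  simp only [P1, P2, P3]
  rcases Bool.eq_false_or_eq_true (c ⟨m - 1, by omega⟩) with h1 | h1
  · right; right; simp [h1]
  · rcases Bool.eq_false_or_eq_true (c ⟨m - 2, by omega⟩) with h2 | h2
    · right; left
      have h3 : c ⟨m - 3, by omega⟩ = true := by
        rcases Bool.eq_false_or_eq_true (c ⟨m - 3, by omega⟩) with h | h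
        · exact h
        · exact absurd ⟨h, h1⟩ h31
      simp [h1, h2, h3]
    · left
      have h3 : c ⟨m - 3, by omega⟩ = true := by
        rcases Bool.eq_false_or_eq_true (c ⟨m - 3, by omega⟩) with h | h
        · exact h
        · exact absurd ⟨h, h1⟩ h31
      have h4 : c ⟨m - 4, by omega⟩ = true := by
        rcases Bool.eq_false_or_eq_true (c ⟨m - 4, by omega⟩) with h | h
        · exact h
        · exact absurd ⟨h, h2⟩ h42
      simp [h1, h2, h3, h4]
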